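/- Let x0, x1 be distinct points of ℝ^{m+1} with ⟨x0,x0⟩_J = ⟨x1,x1⟩_J = 1. Then x1 is reachable from x0 by a timelike geodesic — i.e. there exist u with ⟨u,u⟩_J = −1, ⟨u,x0⟩_J = 0 and t > 0 such that cosh(t)·x0 + sinh(t)·u = x1 — if and only if ⟨x0,x1⟩_J > 1 (equivalently, if and only if x1 lies strictly on the side of the affine tangent hyperplane of S_1^m at x0 not containing the origin). -/
import Mathlib


open Matrix Real

noncomputable section

/-- `J = diag(-1, I_m)` on `ℝ^{m+1}`. -/
def lorJ (m : ℕ) : Matrix (Fin (m+1)) (Fin (m+1)) ℝ :=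
  Matrix.diagonal (fun i => if i = 0 then (-1 : ℝ) else 1)

/-- The scalar product `⟨x,y⟩_J = xᵗ J y`. -/
def lorIp {m : ℕ} (x y : Fin (m+1) → ℝ) : ℝ :=
  x ⬝ᵥ (lorJ m) *ᵥ y

lemma lorIp_sum {m : ℕ} (x y : Fin (m+1) → ℝ) :
    lorIp x y = ∑ i, x i * ((if i = 0 then (-1:ℝ) else 1) * y i) := by
  simp [lorIp, lorJ, dotProduct, Matrix.mulVec_diagonal]

lemma lorIp_comm {m : ℕ} (x y : Fin (m+1) → ℝ) : lorIp x y = lorIp y x := by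
  rw [lorIp_sum, lorIp_sum]
  exact Finset.sum_congr rfl fun i _ => by ring

lemma lorIp_smul_right {m : ℕ} (c : ℝ) (x y : Fin (m+1) → ℝ) :
    lorIp x (c • y) = c * lorIp x y := by
  rw [lorIp_sum, lorIp_sum, Finset.mul_sum]
  exact Finset.sum_congr rfl fun i _ => by simp only [Pi.smul_apply, Pi.add_apply, Pi.sub_apply, smul_eq_mul]; split <;> ring

lemma lorIp_add_right {m : ℕ} (x y z : Fin (m+1) → ℝ) :
    lorIp x (y + z) = lorIp x y + lorIp x z := by
  rw [lorIp_sum, lorIp_sum, lorIp_sum, ← Finset.sum_add_distrib]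
  exact Finset.sum_congr rfl fun i _ => by simp only [Pi.smul_apply, Pi.add_apply, Pi.sub_apply, smul_eq_mul]; split <;> ring

lemma lorIp_sub_right {m : ℕ} (x y z : Fin (m+1) → ℝ) :
    lorIp x (y - z) = lorIp x y - lorIp x z := by
  rw [lorIp_sum, lorIp_sum, lorIp_sum, ← Finset.sum_sub_distrib]
  exact Finset.sum_congr rfl fun i _ => by simp only [Pi.smul_apply, Pi.add_apply, Pi.sub_apply, smul_eq_mul]; split <;> ring

lemma lorIp_sub_left {m : ℕ} (x y z : Fin (m+1) → ℝ) :
    lorIp (y - z) x = lorIp y x - lorIp z x := by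
  rw [lorIp_comm, lorIp_sub_right, lorIp_comm x y, lorIp_comm x z]

lemma lorIp_smul_left {m : ℕ} (c : ℝ) (x y : Fin (m+1) → ℝ) :
    lorIp (c • y) x = c * lorIp y x := by
  rw [lorIp_comm, lorIp_smul_right, lorIp_comm x y]

/-- For distinct `x0, x1 ∈ S_1^m`: `x1` is reachable from `x0` by a timelike geodesic
if and only if `⟨x0,x1⟩_J > 1`, i.e. iff `x1` lies strictly on the side of the affine
tangent hyperplane of `S_1^m` at `x0` not containing the origin. -/
theorem timelike_geodesic_reachability (m : ℕ) (x0 x1 : Fin (m+1) → ℝ)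
    (hx0 : lorIp x0 x0 = 1) (hx1 : lorIp x1 x1 = 1) (hne : x1 ≠ x0) :
    (∃ u : Fin (m+1) → ℝ, lorIp u u = -1 ∧ lorIp u x0 = 0 ∧
        ∃ t : ℝ, 0 < t ∧ Real.cosh t • x0 + Real.sinh t • u = x1) ↔
      1 < lorIp x0 x1 := by
  constructor
  · rintro ⟨u, hu, hux0, t, ht, heq⟩
    have hx0u : lorIp x0 u = 0 := (lorIp_comm x0 u).trans hux0
    have : lorIp x0 x1 = Real.cosh t := by
      rw [← heq, lorIp_add_right, lorIp_smul_right, lorIp_smul_right, hx0, hx0u]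
      ring
    rw [this]
    exact Real.one_lt_cosh.mpr (ne_of_gt ht)
  · intro hc
    set c : ℝ := lorIp x0 x1 with hcdef
    have hx1x0 : lorIp x1 x0 = c := lorIp_comm x1 x0
    have hs2 : (0:ℝ) < c ^ 2 - 1 := by nlinarith
    set s : ℝ := Real.sqrt (c ^ 2 - 1) with hsdef
    have hs : 0 < s := Real.sqrt_pos.mpr hs2
    have hssq : s ^ 2 = c ^ 2 - 1 := Real.sq_sqrt hs2.le
    refine ⟨s⁻¹ • (x1 - c • x0), ?_, ?_, Real.arsinh s, Real.arsinh_pos_iff.mpr hs, ?_⟩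
    · have h1 : lorIp (x1 - c • x0) (x1 - c • x0) = 1 - c ^ 2 := by
        rw [lorIp_sub_right, lorIp_sub_left, lorIp_sub_left, lorIp_smul_left,
          lorIp_smul_right, lorIp_smul_left, lorIp_smul_right, hx0, hx1, hx1x0, hcdef]
        ring
      rw [lorIp_smul_left, lorIp_smul_right, h1]
      field_simp
      nlinarith
    · rw [lorIp_smul_left, lorIp_sub_left, lorIp_smul_left, hx0, hx1x0]
      ring
    · have hcosh : Real.cosh (Real.arsinh s) = c := by
        rw [Real.cosh_arsinh, hssq]
        have : 1 + (c ^ 2 - 1) = c ^ 2 := by ring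
        rw [this, Real.sqrt_sq (by linarith)]
      rw [hcosh, Real.sinh_arsinh, smul_smul, mul_inv_cancel₀ hs.ne', one_smul]
      abel
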